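/- Let K be a field and for each 1 ≤ i ≤ n let A_i ∈ K^{i×(n+1−i)} be a matrix, and let V_i ≤ K^{n+1} be the row space of (I_i | A_i). Then pr_{i+1}(V_i) ⊆ V_{i+1} holds for all 1 ≤ i ≤ n−1 if and only if there exists an upper triangular matrix Δ ∈ U^n(K) with A_i = Δ_[i] for all i. In particular, the map Δ ↦ (V_1, …, V_n) with V_i the row space of (I_i | Δ_[i]) is a bijection from U^n(K) onto the set of tuples (V_1,…,V_n) of subspaces of K^{n+1} that satisfy pr_{i+1}(V_i) ⊆ V_{i+1} for all i and such that each V_i is the row space of (I_i | A) for some A ∈ K^{i×(n+1−i)}. -/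

import Mathlib

/-- The space `U^n(K)` of upper triangular `n × n` matrices over `K`,
as a `K`-subspace of the matrix space. -/
def UT (K : Type*) [Field K] (n : ℕ) : Submodule K (Matrix (Fin n) (Fin n) K) where
  carrier := {A | ∀ i j : Fin n, (j : ℕ) < (i : ℕ) → A i j = 0}
  add_mem' := by
    intro a b ha hb i j h
    simp [Matrix.add_apply, ha i j h, hb i j h]
  zero_mem' := by
    intro i j h
    simp
  smul_mem' := by
    intro c a ha i j h
    simp [Matrix.smul_apply, ha i j h]

/-- For `Δ ∈ U^n(K)` and `i : Fin n` (representing the 1-indexed value `i+1`),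
the upper-right corner submatrix `Δ_[i+1] ∈ K^{(i+1) × (n+1-(i+1))}`,
consisting of the entries `Δ_{k,ℓ}` with (1-indexed) `1 ≤ k ≤ i+1`, `i+1 ≤ ℓ ≤ n`. -/
def corner {K : Type*} [Field K] {n : ℕ} (Δ : Matrix (Fin n) (Fin n) K) (i : Fin n) :
    Matrix (Fin ((i : ℕ) + 1)) (Fin (n + 1 - ((i : ℕ) + 1))) K :=
  Matrix.of fun k l =>
    Δ ⟨k, by have := k.isLt; have := i.isLt; omega⟩
      ⟨(i : ℕ) + l, by have := l.isLt; have := i.isLt; omega⟩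

/-- The flag rank of an upper triangular matrix: the sum of the ranks of its
upper-right corner submatrices, `frk Δ = Σ_{i=1}^{n} rank Δ_[i]`. -/
noncomputable def frk {K : Type*} [Field K] {n : ℕ} (Δ : Matrix (Fin n) (Fin n) K) : ℕ :=
  ∑ i : Fin n, (corner Δ i).rank

/-- The block matrix `(I_i | A)` of size `i × m`, for `A ∈ K^{i × (m - i)}`. -/
def Psi {K : Type*} [Field K] {i m : ℕ} (A : Matrix (Fin i) (Fin (m - i)) K) :
    Matrix (Fin i) (Fin m) K :=
  Matrix.of fun r c =>
    if h : (c : ℕ) < i then (if (c : ℕ) = (r : ℕ) then 1 else 0)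
    else A r ⟨(c : ℕ) - i, by have := c.isLt; omega⟩

/-- The row space of a matrix, as a subspace of `K^p`. -/
def rowSpace {K : Type*} [Field K] {m p : ℕ} (M : Matrix (Fin m) (Fin p) K) :
    Submodule K (Fin p → K) :=
  Submodule.span K (Set.range fun r => M r)

/-- The projection `pr_j : K^m → K^m` setting the `j`-th coordinate to zero
and fixing all other coordinates. -/
def pr {K : Type*} [Field K] {m : ℕ} (j : Fin m) : (Fin m → K) →ₗ[K] (Fin m → K) where
  toFun v := fun c => if c = j then 0 else v c
  map_add' := by
    intro a b; funext c; by_cases h : c = j <;> simp [h]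
  map_smul' := by
    intro a b; funext c; by_cases h : c = j <;> simp [h]

section Aux
variable {K : Type*} [Field K]

lemma psi_apply_lt {i m : ℕ} (A : Matrix (Fin i) (Fin (m - i)) K)
    (r : Fin i) (c : Fin m) (hc : (c : ℕ) < i) :
    Psi A r c = if (c : ℕ) = (r : ℕ) then 1 else 0 := by
  simp [Psi, hc]

lemma psi_apply_ge {i m : ℕ} (A : Matrix (Fin i) (Fin (m - i)) K)
    (r : Fin i) (c : Fin m) (hc : ¬ (c : ℕ) < i) :
    Psi A r c = A r ⟨(c : ℕ) - i, by have := c.isLt; omega⟩ := by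
  simp [Psi, hc]

lemma mem_rowSpace_iff {i m : ℕ} (him : i ≤ m) (A : Matrix (Fin i) (Fin (m - i)) K)
    (v : Fin m → K) :
    v ∈ rowSpace (Psi A) ↔ v = ∑ r : Fin i, v (Fin.castLE him r) • Psi A r := by
  constructor
  · intro hv
    obtain ⟨c, hc⟩ := (Submodule.mem_span_range_iff_exists_fun K).mp hv
    have hcoef : ∀ r' : Fin i, v (Fin.castLE him r') = c r' := by
      intro r'
      rw [← hc]
      simp only [Finset.sum_apply, Pi.smul_apply, smul_eq_mul]
      rw [Finset.sum_eq_single r']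
      · rw [psi_apply_lt _ _ _ (by simp [r'.isLt]), if_pos (by simp), mul_one]
      · intro b _ hb
        rw [psi_apply_lt _ _ _ (by simp [r'.isLt]), if_neg ?_, mul_zero]
        simp only [Fin.coe_castLE]
        exact fun he => hb (Fin.ext he.symm)
      · simp
    have hsum : ∑ r : Fin i, v (Fin.castLE him r) • Psi A r = ∑ r : Fin i, c r • Psi A r :=
      Finset.sum_congr rfl fun r _ => by rw [hcoef]
    rw [hsum, hc]
  · intro h
    rw [h]
    exact Submodule.sum_mem _ fun r _ =>
      Submodule.smul_mem _ _ (Submodule.subset_span ⟨r, rfl⟩)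

lemma rowSpace_psi_inj {i m : ℕ} (him : i ≤ m) (A B : Matrix (Fin i) (Fin (m - i)) K)
    (h : rowSpace (Psi A) = rowSpace (Psi B)) : A = B := by
  have key : ∀ r : Fin i, Psi B r = Psi A r := by
    intro r
    have hm : Psi B r ∈ rowSpace (Psi A) := by
      rw [h]; exact Submodule.subset_span ⟨r, rfl⟩
    have := (mem_rowSpace_iff him A _).mp hm
    rw [this]
    rw [Finset.sum_eq_single r]
    · rw [psi_apply_lt _ _ _ (by simp [r.isLt]), if_pos (by simp), one_smul]
    · intro b _ hb
      rw [psi_apply_lt _ _ _ (by simp [b.isLt]), if_neg ?_, zero_smul]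
      simp only [Fin.coe_castLE]
      exact fun he => hb (Fin.ext he)
    · simp
  ext r l
  have h1 := congrFun (key r) ⟨i + (l : ℕ), by have := l.isLt; omega⟩
  rw [psi_apply_ge _ _ _ (by simp), psi_apply_ge _ _ _ (by simp)] at h1
  have e : (⟨i + (l : ℕ) - i, by have := l.isLt; omega⟩ : Fin (m - i)) = l :=
    Fin.ext (by simp)
  rw [e] at h1
  exact h1.symm

variable {n : ℕ}

/-- The compatibility condition between consecutive corner matrices. -/
def Compat (A : (i : Fin n) → Matrix (Fin ((i : ℕ) + 1)) (Fin (n + 1 - ((i : ℕ) + 1))) K) :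
    Prop :=
  ∀ (i : Fin n) (h : (i : ℕ) + 1 < n) (k : Fin ((i : ℕ) + 1))
    (l : Fin (n + 1 - ((i : ℕ) + 2))),
    A ⟨(i : ℕ) + 1, h⟩ ⟨(k : ℕ), by simp only [Fin.val_mk]; have := k.isLt; omega⟩ l
      = A i k ⟨(l : ℕ) + 1, by have := l.isLt; have := i.isLt; omega⟩

lemma compat_iff_exists_UT
    (A : (i : Fin n) → Matrix (Fin ((i : ℕ) + 1)) (Fin (n + 1 - ((i : ℕ) + 1))) K) :
    Compat A ↔ ∃ Δ ∈ UT K n, ∀ i : Fin n, A i = corner Δ i := by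
  constructor
  · intro hcomp
    have key : ∀ (d : ℕ) (i : Fin n) (hd : (i : ℕ) + d < n) (k : Fin ((i : ℕ) + 1))
        (l : ℕ) (hl : l < n + 1 - ((i : ℕ) + d + 1)),
        A ⟨(i : ℕ) + d, hd⟩ ⟨(k : ℕ), by simp only [Fin.val_mk]; have := k.isLt; omega⟩ ⟨l, hl⟩
          = A i k ⟨l + d, by omega⟩ := by
      intro d
      induction d with
      | zero =>
        intro i hd k l hl
        rfl
      | succ d ih =>
        intro i hd k l hl
        have hd' : (i : ℕ) + d < n := by omega
        have h1 := hcomp ⟨(i : ℕ) + d, hd'⟩ (by exact hd)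
          ⟨(k : ℕ), by simp only [Fin.val_mk]; have := k.isLt; omega⟩ ⟨l, hl⟩
        have h2 := ih i hd' k (l + 1) (by omega)
        refine h1.trans (h2.trans ?_)
        congr 1
        exact Fin.ext (by simp only [Fin.val_mk]; omega)
    refine ⟨fun k j => if hkj : (k : ℕ) ≤ (j : ℕ) then
        A j ⟨(k : ℕ), by omega⟩ ⟨0, by have := j.isLt; omega⟩ else 0, ?_, ?_⟩
    · intro a b hba
      exact dif_neg (by omega)
    · intro i
      ext k l
      have hkl : (k : ℕ) ≤ (i : ℕ) + (l : ℕ) := by have := k.isLt; omega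
      have hin : (i : ℕ) + (l : ℕ) < n := by have := l.isLt; omega
      show A i k l = _
      simp only [corner, Matrix.of_apply, dif_pos hkl]
      refine ((key (l : ℕ) i hin k 0 (by omega)).trans ?_).symm
      congr 1
      exact Fin.ext (by simp only [Fin.val_mk]; omega)
  · rintro ⟨Δ, hΔ, hA⟩
    intro i h k l
    rw [hA, hA]
    show Δ _ _ = Δ _ _
    congr 1
    exact Fin.ext (by simp only [Fin.val_mk]; omega)

lemma pr_apply {m : ℕ} (j : Fin m) (v : Fin m → K) (c : Fin m) :
    pr j v c = if c = j then 0 else v c := rfl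

lemma incl_iff_compat {n : ℕ}
    (A : (i : Fin n) → Matrix (Fin ((i : ℕ) + 1)) (Fin (n + 1 - ((i : ℕ) + 1))) K) :
    (∀ (i : Fin n) (h : (i : ℕ) + 1 < n),
        Submodule.map (pr (⟨(i : ℕ) + 1, Nat.succ_lt_succ i.isLt⟩ : Fin (n + 1)))
            (rowSpace (Psi (A i))) ≤ rowSpace (Psi (A ⟨(i : ℕ) + 1, h⟩))) ↔ Compat A := by
  constructor
  · intro hincl i h k l
    have hl := l.isLt
    have hk := k.isLt
    set j : Fin (n + 1) := ⟨(i : ℕ) + 1, by have := i.isLt; omega⟩ with hj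
    set v : Fin (n + 1) → K := Psi (A i) k with hv
    have hvmem : v ∈ rowSpace (Psi (A i)) := Submodule.subset_span ⟨k, rfl⟩
    have hwmem : pr j v ∈ rowSpace (Psi (A ⟨(i : ℕ) + 1, h⟩)) :=
      hincl i h ⟨v, hvmem, rfl⟩
    have him : (i : ℕ) + 1 + 1 ≤ n + 1 := by omega
    have hw := (mem_rowSpace_iff him _ _).mp hwmem
    have hc : (i : ℕ) + 2 + (l : ℕ) < n + 1 := by
      omega
    set c : Fin (n + 1) := ⟨(i : ℕ) + 2 + (l : ℕ), hc⟩ with hcdef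
    have hceq := congrFun hw c
    have hLHS : pr j v c = A i k ⟨(l : ℕ) + 1, by have := i.isLt; omega⟩ := by
      rw [pr_apply, if_neg (by simp [hcdef, hj, Fin.ext_iff]; omega), hv,
        psi_apply_ge _ _ _ (by simp [hcdef]; omega)]
      congr 1
      exact Fin.ext (by simp [hcdef]; omega)
    have hRHS : (∑ r : Fin ((i : ℕ) + 1 + 1), pr j v (Fin.castLE him r)
          • Psi (A ⟨(i : ℕ) + 1, h⟩) r) c
        = A ⟨(i : ℕ) + 1, h⟩ ⟨(k : ℕ), by simp only [Fin.val_mk]; omega⟩ l := by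
      simp only [Finset.sum_apply, Pi.smul_apply, smul_eq_mul]
      rw [Finset.sum_eq_single (⟨(k : ℕ), by omega⟩ : Fin ((i : ℕ) + 1 + 1))]
      · rw [psi_apply_ge _ _ _ (by simp [hcdef]; omega),
          pr_apply, if_neg (by simp [hj, Fin.ext_iff]; omega), hv,
          psi_apply_lt _ _ _ (by simp; omega), if_pos (by simp), one_mul]
        congr 1
        exact Fin.ext (by simp [hcdef])
      · intro b _ hb
        rw [pr_apply]
        by_cases hbj : Fin.castLE him b = j
        · rw [if_pos hbj, zero_mul]
        · rw [if_neg hbj, hv, psi_apply_lt _ _ _ ?hblt, if_neg ?hbk, zero_mul]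
          case hblt =>
            have : (b : ℕ) ≠ (i : ℕ) + 1 := by
              simpa [hj, Fin.ext_iff] using hbj
            simp only [Fin.coe_castLE]
            omega
          case hbk =>
            simp only [Fin.coe_castLE]
            exact fun he => hb (Fin.ext he)
      · simp
    rw [hLHS] at hceq
    rw [hRHS] at hceq
    exact hceq.symm
  · intro hcomp i h
    rw [rowSpace, Submodule.map_span_le]
    rintro _ ⟨r, rfl⟩
    have key : pr (⟨(i : ℕ) + 1, by have := i.isLt; omega⟩ : Fin (n + 1)) (Psi (A i) r)
        = Psi (A ⟨(i : ℕ) + 1, h⟩) ⟨(r : ℕ), by simp only [Fin.val_mk]; have := r.isLt; omega⟩ := by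
      funext c
      rw [pr_apply]
      rcases lt_trichotomy (c : ℕ) ((i : ℕ) + 1) with hlt | heq | hgt
      · rw [if_neg (by simp [Fin.ext_iff]; omega),
          psi_apply_lt _ _ _ hlt, psi_apply_lt _ _ _ (by simp only [Fin.val_mk]; omega)]
      · rw [if_pos (Fin.ext heq),
          psi_apply_lt _ _ _ (by simp only [Fin.val_mk]; omega), if_neg (by simp only [Fin.val_mk]; have := r.isLt; omega)]
      · rw [if_neg (by simp [Fin.ext_iff]; omega),
          psi_apply_ge _ _ _ (by omega), psi_apply_ge _ _ _ (by simp only [Fin.val_mk]; omega)]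
        have hcomp' := hcomp i h r ⟨(c : ℕ) - ((i : ℕ) + 2), by
          have := c.isLt; omega⟩
        refine Eq.trans ?_ hcomp'.symm
        congr 1
        exact Fin.ext (by simp only [Fin.val_mk]; omega)
    rw [key]
    exact Submodule.subset_span ⟨_, rfl⟩

end Aux

section MainAux
variable {K : Type*} [Field K] {n : ℕ}

lemma compat_corner (Δ : Matrix (Fin n) (Fin n) K) :
    Compat (fun i => corner Δ i) := by
  intro i h k l
  show Δ _ _ = Δ _ _
  congr 1
  exact Fin.ext (by simp only [Fin.val_mk]; omega)

end MainAux

/-- Let `V_i` be the row space of `(I_i | A_i)` for matrices `A_i ∈ K^{i×(n+1-i)}`,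
`i = 1, …, n`.  Then `pr_{i+1}(V_i) ⊆ V_{i+1}` holds for all `1 ≤ i ≤ n-1` if and only if
there is an upper triangular `Δ ∈ U^n(K)` with `A_i = Δ_[i]` for all `i`.  Moreover the map
`Δ ↦ (V_1, …, V_n)`, sending `Δ` to the tuple of row spaces of the `(I_i | Δ_[i])`,
is a bijection from `U^n(K)` onto the set of tuples `(V_1, …, V_n)` such that each `V_i`
is the row space of some `(I_i | A)` and `pr_{i+1}(V_i) ⊆ V_{i+1}` for all `i`.
(Here `i : Fin n` encodes the 1-indexed value `i+1`, and the `j`-th coordinate of `K^{n+1}`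
is 0-indexed, so 1-indexed `pr_{i+1}` is `pr` at the 0-indexed coordinate `i`.) -/
theorem degenerate_flag_cell_parametrization {K : Type*} [Field K] {n : ℕ} :
    (∀ A : (i : Fin n) → Matrix (Fin ((i : ℕ) + 1)) (Fin (n + 1 - ((i : ℕ) + 1))) K,
      ((∀ (i : Fin n) (h : (i : ℕ) + 1 < n),
          Submodule.map (pr (⟨(i : ℕ) + 1, by have := i.isLt; omega⟩ : Fin (n + 1)))
              (rowSpace (Psi (A i))) ≤
            rowSpace (Psi (A ⟨(i : ℕ) + 1, h⟩))) ↔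
        ∃ Δ ∈ UT K n, ∀ i : Fin n, A i = corner Δ i)) ∧
    Set.BijOn
      (fun (Δ : Matrix (Fin n) (Fin n) K) (i : Fin n) => rowSpace (Psi (corner Δ i)))
      (UT K n)
      {V : Fin n → Submodule K (Fin (n + 1) → K) |
        (∀ i : Fin n, ∃ B : Matrix (Fin ((i : ℕ) + 1)) (Fin (n + 1 - ((i : ℕ) + 1))) K,
          V i = rowSpace (Psi B)) ∧
        ∀ (i : Fin n) (h : (i : ℕ) + 1 < n),
          Submodule.map (pr (⟨(i : ℕ) + 1, by have := i.isLt; omega⟩ : Fin (n + 1)))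
              (V i) ≤ V ⟨(i : ℕ) + 1, h⟩} := by
  have main_iff : ∀ A : (i : Fin n) → Matrix (Fin ((i : ℕ) + 1))
      (Fin (n + 1 - ((i : ℕ) + 1))) K,
      ((∀ (i : Fin n) (h : (i : ℕ) + 1 < n),
          Submodule.map (pr (⟨(i : ℕ) + 1, by have := i.isLt; omega⟩ : Fin (n + 1)))
              (rowSpace (Psi (A i))) ≤
            rowSpace (Psi (A ⟨(i : ℕ) + 1, h⟩))) ↔
        ∃ Δ ∈ UT K n, ∀ i : Fin n, A i = corner Δ i) :=
    fun A => (incl_iff_compat A).trans (compat_iff_exists_UT A)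
  refine ⟨main_iff, ?_, ?_, ?_⟩
  · -- MapsTo
    intro Δ _
    refine ⟨fun i => ⟨corner Δ i, rfl⟩, ?_⟩
    exact (incl_iff_compat (fun i => corner Δ i)).mpr (compat_corner Δ)
  · -- InjOn
    intro Δ hΔ Δ' hΔ' heq
    have hc : ∀ i : Fin n, corner Δ i = corner Δ' i := fun i =>
      rowSpace_psi_inj (by omega) _ _ (congrFun heq i)
    ext k j
    rcases le_or_gt (k : ℕ) (j : ℕ) with hkj | hkj
    · have := congrFun (congrFun (hc j) ⟨(k : ℕ), by omega⟩)
        ⟨0, by have := j.isLt; omega⟩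
      simpa [corner] using this
    · rw [hΔ k j hkj, hΔ' k j hkj]
  · -- SurjOn
    intro V hV
    obtain ⟨h1, h2⟩ := hV
    choose B hB using h1
    have hincl : ∀ (i : Fin n) (h : (i : ℕ) + 1 < n),
        Submodule.map (pr (⟨(i : ℕ) + 1, by have := i.isLt; omega⟩ : Fin (n + 1)))
            (rowSpace (Psi (B i))) ≤ rowSpace (Psi (B ⟨(i : ℕ) + 1, h⟩)) := by
      intro i h
      rw [← hB i, ← hB ⟨(i : ℕ) + 1, h⟩]
      exact h2 i h
    obtain ⟨Δ, hΔ, hAB⟩ := (main_iff B).mp hincl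
    exact ⟨Δ, hΔ, funext fun i => by
      show rowSpace (Psi (corner Δ i)) = V i
      rw [← hAB i, ← hB i]⟩
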